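/- Let N be a smooth 1-dimensional manifold without boundary and let γ = (γ₁, γ₂) : N → ℝ² be a smooth immersion satisfying condition (∗). Then for any nonempty open set U₁ × U₂ of N × N there exists (q₁, q₂) ∈ U₁ × U₂ such that det [ γ′(q₁) , γ(q₂) − γ(q₁) ] ≠ 0, i.e., γ₁′(q₁)(γ₂(q₂) − γ₂(q₁)) − γ₂′(q₁)(γ₁(q₂) − γ₁(q₁)) ≠ 0, where γ′(q₁) is the derivative of γ in a local coordinate t₁ around q₁. -/

import Mathlib

open Manifold

noncomputable section

abbrev E2 := EuclideanSpace ℝ (Fin 2)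
abbrev E1 := EuclideanSpace ℝ (Fin 1)

/-- The distance-squared mapping `D_p : ℝ² → ℝ²` associated to `p = (p₁, p₂)`. -/
def Dp (p₁ p₂ : E2) (x : E2) : E2 :=
  (EuclideanSpace.equiv (Fin 2) ℝ).symm ![‖x - p₁‖ ^ 2, ‖x - p₂‖ ^ 2]

variable {N : Type*} [TopologicalSpace N] [ChartedSpace E1 N]
  [IsManifold (𝓡 1) (⊤ : ℕ∞) N]

/-- The local-coordinate representative of `γ` around `q`, using the preferred chart. -/
def gammaLocal (γ : N → E2) (q : N) : ℝ → E2 :=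
  fun t => γ ((extChartAt (𝓡 1) q).symm (EuclideanSpace.single 0 t))

/-- The local coordinate of the point `q` itself. -/
def coord (q : N) : ℝ := extChartAt (𝓡 1) q q 0

/-- The curvature of `γ` at `q`, computed in the preferred local coordinate around `q`:
`κ(q) = (γ₁′γ₂″ − γ₂′γ₁″) / ((γ₁′)² + (γ₂′)²)^{3/2}`. -/
def curvatureAt (γ : N → E2) (q : N) : ℝ :=
  (deriv (gammaLocal γ q) (coord q) 0 * deriv (deriv (gammaLocal γ q)) (coord q) 1 -
   deriv (gammaLocal γ q) (coord q) 1 * deriv (deriv (gammaLocal γ q)) (coord q) 0) /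
  ((deriv (gammaLocal γ q) (coord q) 0 ^ 2 + deriv (gammaLocal γ q) (coord q) 1 ^ 2) ^ ((3:ℝ)/2))

/-- Condition (∗): on every nonempty open subset of `N` there is a point of nonzero curvature. -/
def SatisfiesStar (γ : N → E2) : Prop :=
  ∀ U : Set N, IsOpen U → U.Nonempty → ∃ q ∈ U, curvatureAt γ q ≠ 0

/-- `det [u, v] = u₁v₂ − u₂v₁` for `u, v ∈ ℝ²`. -/
def det2 (u v : E2) : ℝ := u 0 * v 1 - u 1 * v 0

/-- If `φ ∘ g` is locally constant near `t`, then `φ (deriv g t) = 0`. -/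
private lemma clm_deriv_zero (φ : E2 →L[ℝ] ℝ) (g : ℝ → E2) (t c : ℝ)
    (h : ∀ᶠ s in nhds t, φ (g s) = c) : φ (deriv g t) = 0 := by
  by_cases hd : DifferentiableAt ℝ g t
  · have h1 : HasDerivAt (fun s => φ (g s)) (φ (deriv g t)) t :=
      φ.hasFDerivAt.comp_hasDerivAt t hd.hasDerivAt
    have h2 : deriv (fun s => φ (g s)) t = deriv (fun _ : ℝ => c) t :=
      Filter.EventuallyEq.deriv_eq h
    rw [← h1.deriv, h2, deriv_const]
  · rw [deriv_zero_of_not_differentiableAt hd, map_zero]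

private lemma single_coord (q : N) :
    EuclideanSpace.single (0 : Fin 1) (coord q) = extChartAt (𝓡 1) q q := by
  ext j
  have hj : j = 0 := Subsingleton.elim _ _
  subst hj
  simp [coord, EuclideanSpace.single_apply]

theorem stmt8 (γ : N → E2)
    (hsmooth : ContMDiff (𝓡 1) 𝓘(ℝ, E2) (⊤ : ℕ∞) γ)
    (himm : ∀ q : N, Function.Injective (mfderiv (𝓡 1) 𝓘(ℝ, E2) γ q))
    (hstar : SatisfiesStar γ)
    (U₁ U₂ : Set N) (hU₁ : IsOpen U₁) (hU₂ : IsOpen U₂)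
    (hne₁ : U₁.Nonempty) (hne₂ : U₂.Nonempty) :
    ∃ q₁ ∈ U₁, ∃ q₂ ∈ U₂,
      det2 (deriv (gammaLocal γ q₁) (coord q₁)) (γ q₂ - γ q₁) ≠ 0 := by
  by_contra hcon
  push_neg at hcon
  obtain ⟨q₁, hq₁, hκ₁⟩ := hstar U₁ hU₁ hne₁
  set v := deriv (gammaLocal γ q₁) (coord q₁) with hv
  -- the tangent vector at q₁ is nonzero, since the curvature there is nonzero
  have hvne : v 0 ≠ 0 ∨ v 1 ≠ 0 := by
    by_contra hz
    push_neg at hz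
    exact hκ₁ (by unfold curvatureAt; rw [← hv, hz.1, hz.2]; ring_nf)
  obtain ⟨q, hqU, hκ⟩ := hstar U₂ hU₂ hne₂
  apply hκ
  -- the linear functional vanishing on directions parallel to `v`
  set φ : E2 →L[ℝ] ℝ :=
    v 0 • (EuclideanSpace.proj (1 : Fin 2)) - v 1 • (EuclideanSpace.proj (0 : Fin 2)) with hφdef
  have hφ : ∀ x : E2, φ x = v 0 * x 1 - v 1 * x 0 := by
    intro x; simp [hφdef]
  set g := gammaLocal γ q with hg
  set t₀ := coord q with ht₀
  -- the parametrization in local coordinates around q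
  set F : ℝ → N := fun t => (extChartAt (𝓡 1) q).symm (EuclideanSpace.single 0 t) with hF
  have hFt₀ : F t₀ = q := by
    rw [hF]
    simp only
    rw [single_coord q]
    exact (extChartAt (𝓡 1) q).left_inv (mem_extChartAt_source q)
  have hFcont : ContinuousAt F t₀ := by
    have hsc : Continuous (fun t : ℝ => EuclideanSpace.single (0 : Fin 1) t) := by
      have h : (fun t : ℝ => EuclideanSpace.single (0 : Fin 1) t)
          = fun t : ℝ => t • EuclideanSpace.single (0 : Fin 1) (1 : ℝ) := by
        funext t; ext j; simp [EuclideanSpace.single_apply]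
      rw [h]; exact continuous_id.smul continuous_const
    have hsymm : ContinuousAt (extChartAt (𝓡 1) q).symm
        (EuclideanSpace.single (0 : Fin 1) t₀) := by
      rw [single_coord q]
      exact continuousAt_extChartAt_symm q
    exact hsymm.comp hsc.continuousAt
  -- near t₀, φ ∘ g is constant
  have hkey : ∀ᶠ t in nhds t₀, φ (g t) = φ (γ q₁) := by
    have hmem : ∀ᶠ t in nhds t₀, F t ∈ U₂ :=
      hFcont (hU₂.mem_nhds (hFt₀ ▸ hqU))
    filter_upwards [hmem] with t ht
    have hdet := hcon q₁ hq₁ (F t) ht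
    have h1 : (γ (F t) - γ q₁) 0 = γ (F t) 0 - γ q₁ 0 := rfl
    have h2 : (γ (F t) - γ q₁) 1 = γ (F t) 1 - γ q₁ 1 := rfl
    rw [det2, ← hv, h1, h2] at hdet
    have hgt : g t = γ (F t) := rfl
    rw [hgt, hφ, hφ]
    linarith
  have h1 : ∀ᶠ t in nhds t₀, φ (deriv g t) = 0 := by
    filter_upwards [hkey.eventually_nhds] with t ht
    exact clm_deriv_zero φ g t (φ (γ q₁)) ht
  have h3 : φ (deriv g t₀) = 0 := h1.self_of_nhds
  have h2 : φ (deriv (deriv g) t₀) = 0 := clm_deriv_zero φ (deriv g) t₀ 0 h1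
  rw [hφ] at h2 h3
  -- conclude the curvature numerator vanishes
  unfold curvatureAt
  rw [← hg, ← ht₀]
  have hnum : deriv g t₀ 0 * deriv (deriv g) t₀ 1 - deriv g t₀ 1 * deriv (deriv g) t₀ 0 = 0 := by
    rcases hvne with h | h
    · have : v 0 * (deriv g t₀ 0 * deriv (deriv g) t₀ 1
          - deriv g t₀ 1 * deriv (deriv g) t₀ 0) = 0 := by
        linear_combination (deriv g t₀ 0) * h2 - (deriv (deriv g) t₀ 0) * h3
      exact (mul_eq_zero.mp this).resolve_left h
    · have : v 1 * (deriv g t₀ 0 * deriv (deriv g) t₀ 1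
          - deriv g t₀ 1 * deriv (deriv g) t₀ 0) = 0 := by
        linear_combination (deriv g t₀ 1) * h2 - (deriv (deriv g) t₀ 1) * h3
      exact (mul_eq_zero.mp this).resolve_left h
  rw [hnum, zero_div]
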